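/- Let G be a countable group, X a countable set, G₁ ⊆ G₂ ⊆ ⋯ an increasing sequence of subgroups of G with ∪ᵢ Gᵢ = G, and α: G ↷ X an action. If for every i the restriction of α to Gᵢ is sofic, then α is sofic. -/

import Mathlib

open scoped Classical Pointwise

noncomputable def hDist {A : Type*} [Fintype A] (σ τ : Equiv.Perm A) : ℝ :=
  ((Finset.univ.filter fun a => σ a ≠ τ a).card : ℝ) / (Fintype.card A : ℝ)

/-- `φ : G → Sym(Fin n)` is an `(F, E, ε)`-orbit approximation of the action `α : G ↷ X`. -/
def IsOrbitApprox {G X : Type*} [Group G] {n : ℕ} (α : G →* Equiv.Perm X)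
    (F : Finset G) (E : Finset X) (ε : ℝ) (φ : G → Equiv.Perm (Fin n)) : Prop :=
  ∃ (m : ℕ) (S : Finset (Fin n)) (π : Fin n → X → Fin m),
    ((S.card : ℝ) > (1 - ε) * (n : ℝ)) ∧
    (∀ s ∈ S, Set.InjOn (π s) (E : Set X)) ∧
    (∀ s ∈ S, ∀ g ∈ F, ∀ x ∈ E, φ g s ∈ S → α g⁻¹ x ∈ E →
      π (φ g s) x = π s (α g⁻¹ x))

/-- Soficity of an action `α : G ↷ X` given as a homomorphism `G →* Sym(X)`. -/
def SoficAction {G X : Type*} [Group G] (α : G →* Equiv.Perm X) : Prop :=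
  ∀ (F : Finset G) (E : Finset X) (ε : ℝ), 0 < ε →
    ∃ (n : ℕ) (φ : G → Equiv.Perm (Fin n)),
      φ 1 = 1 ∧
      (∀ g ∈ F, ∀ h ∈ F, hDist (φ (g * h)) (φ g * φ h) < ε) ∧
      IsOrbitApprox α F E ε φ

/-- Soficity of a group. -/
def SoficGroup (G : Type*) [Group G] : Prop :=
  ∀ (F : Finset G) (ε : ℝ), 0 < ε →
    ∃ (n : ℕ) (φ : G → Equiv.Perm (Fin n)),
      φ 1 = 1 ∧
      (∀ g ∈ F, ∀ h ∈ F, hDist (φ (g * h)) (φ g * φ h) < ε) ∧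
      (∀ g ∈ F, g ≠ 1 → hDist 1 (φ g) > 1 - ε)

theorem stmt_4 {G X : Type*} [Group G] [Countable G] [Countable X]
    (α : G →* Equiv.Perm X) (Gs : ℕ → Subgroup G) (hmono : Monotone Gs)
    (hunion : ∀ g : G, ∃ i, g ∈ Gs i)
    (hsofic : ∀ i, SoficAction (α.comp (Gs i).subtype)) :
    SoficAction α := by
  intro F E ε hε
  -- find N containing all of F
  have hN : ∃ N, ∀ g ∈ F, g ∈ Gs N := by
    choose ix hix using hunion
    refine ⟨F.sup ix, fun g hg => ?_⟩
    exact hmono (Finset.le_sup hg) (hix g)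
  obtain ⟨N, hFN⟩ := hN
  set F' : Finset (Gs N) := F.subtype (· ∈ Gs N) with hF'
  obtain ⟨n, ψ, hψ1, hψmul, m, S, π, hS, hinj, hcomp⟩ := hsofic N F' E ε hε
  refine ⟨n, fun g => if h : g ∈ Gs N then ψ ⟨g, h⟩ else 1, ?_, ?_, ?_⟩
  · simp only [dif_pos (one_mem (Gs N))]
    convert hψ1
    rfl
  · intro g hg h hh
    have hgN := hFN g hg
    have hhN := hFN h hh
    have hghN : g * h ∈ Gs N := mul_mem hgN hhN
    simp only [dif_pos hgN, dif_pos hhN, dif_pos hghN]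
    have : (⟨g * h, hghN⟩ : Gs N) = ⟨g, hgN⟩ * ⟨h, hhN⟩ := rfl
    rw [this]
    exact hψmul _ (by simp [hF', Finset.mem_subtype, hg]) _
      (by simp [hF', Finset.mem_subtype, hh])
  · refine ⟨m, S, π, hS, hinj, ?_⟩
    intro s hs g hg x hx hgs hax
    have hgN := hFN g hg
    simp only [dif_pos hgN] at hgs ⊢
    have := hcomp s hs ⟨g, hgN⟩ (by simp [hF', Finset.mem_subtype, hg]) x hx hgs ?_
    · convert this using 3
      rfl
    · convert hax using 2
      rfl
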